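/- Define g : [0,1] → ℝ by g(t) = 1/ln(e/t) for t ∈ (0,1] and g(0) = 0. Then g' ∈ L¹([0,1]) with ∫_0^1 g'(t) dt = 1, but S_d[g'] ∉ L¹([0,1]) for any d ≥ 3. In particular, S_d is not bounded from L¹([0,1]) to L¹([0,1]). -/

import Mathlib

open MeasureTheory Real Set

noncomputable def c (d : ℕ) : ℝ :=
  2 * Real.Gamma ((d : ℝ) / 2) / (Real.sqrt π * Real.Gamma (((d : ℝ) - 1) / 2))

noncomputable def rho (d : ℕ) (t : ℝ) : ℝ :=
  c d * (1 - t ^ 2) ^ (((d : ℝ) - 3) / 2)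

noncomputable def S (d : ℕ) (f : ℝ → ℝ) (s : ℝ) : ℝ :=
  ∫ t in (0:ℝ)..1, f (t * s) * rho d t

noncomputable def gd (t : ℝ) : ℝ := 1 / (t * (Real.log (Real.exp 1 / t)) ^ 2)

lemma c_pos {d : ℕ} (hd : 3 ≤ d) : 0 < c d := by
  have h1 : (0:ℝ) < (d:ℝ) / 2 := by
    have : (3:ℝ) ≤ d := by exact_mod_cast hd
    linarith
  have h2 : (0:ℝ) < ((d:ℝ) - 1) / 2 := by
    have : (3:ℝ) ≤ d := by exact_mod_cast hd
    linarith
  have := Real.Gamma_pos_of_pos h1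
  have := Real.Gamma_pos_of_pos h2
  have := Real.sqrt_pos.mpr Real.pi_pos
  unfold c; positivity

lemma p_nonneg {d : ℕ} (hd : 3 ≤ d) : 0 ≤ ((d:ℝ) - 3) / 2 := by
  have : (3:ℝ) ≤ d := by exact_mod_cast hd
  linarith

lemma rho_nonneg {d : ℕ} (hd : 3 ≤ d) {t : ℝ} (ht : t ∈ Icc (0:ℝ) 1) : 0 ≤ rho d t := by
  have h1 : (0:ℝ) ≤ 1 - t ^ 2 := by nlinarith [ht.1, ht.2]
  exact mul_nonneg (c_pos hd).le (Real.rpow_nonneg h1 _)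

lemma rho_le {d : ℕ} (hd : 3 ≤ d) {t : ℝ} (ht : t ∈ Icc (0:ℝ) 1) : rho d t ≤ c d := by
  have h1 : (0:ℝ) ≤ 1 - t ^ 2 := by nlinarith [ht.1, ht.2]
  have h2 : (1:ℝ) - t ^ 2 ≤ 1 := by nlinarith [ht.1]
  have : (1 - t ^ 2) ^ (((d:ℝ) - 3) / 2) ≤ 1 :=
    Real.rpow_le_one h1 h2 (p_nonneg hd)
  calc rho d t ≤ c d * 1 := mul_le_mul_of_nonneg_left this (c_pos hd).le
    _ = c d := mul_one _

noncomputable def K (d : ℕ) : ℝ := c d * (3/4 : ℝ) ^ (((d:ℝ) - 3) / 2)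

lemma K_pos {d : ℕ} (hd : 3 ≤ d) : 0 < K d := by
  have := c_pos hd
  unfold K
  positivity

lemma rho_ge {d : ℕ} (hd : 3 ≤ d) {t : ℝ} (ht : t ∈ Icc (0:ℝ) (1/2)) : K d ≤ rho d t := by
  have h1 : (3/4:ℝ) ≤ 1 - t ^ 2 := by nlinarith [ht.1, ht.2]
  have : (3/4:ℝ) ^ (((d:ℝ) - 3) / 2) ≤ (1 - t ^ 2) ^ (((d:ℝ) - 3) / 2) :=
    Real.rpow_le_rpow (by norm_num) h1 (p_nonneg hd)
  exact mul_le_mul_of_nonneg_left this (c_pos hd).le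

lemma gd_measurable : Measurable gd := by
  unfold gd
  exact (measurable_const.div ((measurable_id.mul (((measurable_const.div measurable_id).log).pow_const 2))))

lemma rho_continuous {d : ℕ} (hd : 3 ≤ d) : Continuous (rho d) := by
  unfold rho
  exact continuous_const.mul (((continuous_const.sub (continuous_pow 2)).rpow_const
    (fun x => Or.inr (p_nonneg hd))))

lemma gd_nonneg (t : ℝ) (ht : 0 ≤ t) : 0 ≤ gd t := by
  unfold gd; positivity

lemma log_e_div {t : ℝ} (ht : 0 < t) : Real.log (Real.exp 1 / t) = 1 - Real.log t := by
  rw [Real.log_div (Real.exp_ne_zero 1) ht.ne', Real.log_exp]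

lemma one_sub_log_pos {t : ℝ} (ht : 0 < t) (ht1 : t ≤ 1) : 0 < 1 - Real.log t := by
  have := Real.log_nonpos ht.le ht1; linarith

lemma hasDerivAt_G {t : ℝ} (ht : 0 < t) (ht1 : t ≤ 1) :
    HasDerivAt (fun u => (1 - Real.log u)⁻¹) (gd t) t := by
  have h1 : 1 - Real.log t ≠ 0 := (one_sub_log_pos ht ht1).ne'
  have h2 : HasDerivAt (fun u => 1 - Real.log u) (-t⁻¹) t := by
    simpa using ((Real.hasDerivAt_log ht.ne').const_sub 1)
  have h3 := h2.inv h1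
  refine h3.congr_deriv ?_
  rw [gd, log_e_div ht]
  field_simp

lemma cv (x : ℝ) (hx0 : 0 < x) (hx1 : x ≤ 1) :
    IntegrableOn gd (Ioc 0 x) ∧ ∫ t in Ioc 0 x, gd t = (1 - Real.log x)⁻¹ := by
  set G : ℝ → ℝ := fun u => (1 - Real.log u)⁻¹ with hG
  have hmem : ∀ t ∈ Ioc (0:ℝ) x, 0 < t ∧ t ≤ 1 := fun t ht => ⟨ht.1, ht.2.trans hx1⟩
  have hderiv : ∀ t ∈ Ioc (0:ℝ) x, HasDerivWithinAt G (gd t) (Ioc (0:ℝ) x) t := fun t ht =>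
    (hasDerivAt_G (hmem t ht).1 (hmem t ht).2).hasDerivWithinAt
  have hmono : StrictMonoOn G (Ioc (0:ℝ) x) := by
    intro a ha b hb hab
    have h1 := one_sub_log_pos (hmem a ha).1 (hmem a ha).2
    have h2 := one_sub_log_pos (hmem b hb).1 (hmem b hb).2
    have : Real.log a < Real.log b := Real.log_lt_log (hmem a ha).1 hab
    exact inv_strictAnti₀ h2 (by linarith)
  have hinj : InjOn G (Ioc 0 x) := hmono.injOn
  have himg : G '' Ioc 0 x = Ioc 0 (G x) := by
    ext y
    constructor
    · rintro ⟨t, ht, rfl⟩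
      have h1 := one_sub_log_pos (hmem t ht).1 (hmem t ht).2
      have h2 := one_sub_log_pos hx0 hx1
      refine ⟨by positivity, ?_⟩
      have : Real.log t ≤ Real.log x := Real.log_le_log (hmem t ht).1 ht.2
      exact inv_anti₀ h2 (by linarith)
    · rintro ⟨hy0, hy1⟩
      refine ⟨Real.exp (1 - y⁻¹), ⟨Real.exp_pos _, ?_⟩, ?_⟩
      · have h2 := one_sub_log_pos hx0 hx1
        have : 1 - Real.log x ≤ y⁻¹ := by
          rw [hG] at hy1; exact (le_inv_comm₀ hy0 h2).mp hy1
        calc Real.exp (1 - y⁻¹) ≤ Real.exp (Real.log x) :=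
              Real.exp_le_exp.mpr (by linarith)
          _ = x := Real.exp_log hx0
      · rw [hG]; simp [Real.log_exp]
  have key := integral_image_eq_integral_abs_deriv_smul measurableSet_Ioc hderiv hinj
      (fun _ => (1:ℝ))
  have keyInt := (integrableOn_image_iff_integrableOn_abs_deriv_smul measurableSet_Ioc hderiv hinj
      (fun _ => (1:ℝ))).mp (by rw [himg]; exact (integrableOn_const measure_Ioc_lt_top.ne))
  have habs : ∀ t ∈ Ioc (0:ℝ) x, |gd t| • (1:ℝ) = gd t := by
    intro t ht
    rw [smul_eq_mul, mul_one, abs_of_nonneg (gd_nonneg t (hmem t ht).1.le)]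
  have hint : IntegrableOn gd (Ioc 0 x) := by
    refine keyInt.congr_fun habs measurableSet_Ioc
  refine ⟨hint, ?_⟩
  have hGx : 0 ≤ G x := (inv_pos.mpr (one_sub_log_pos hx0 hx1)).le
  rw [himg] at key
  rw [setIntegral_congr_fun measurableSet_Ioc habs] at key
  rw [← key]
  simp [Real.volume_Ioc, ENNReal.toReal_ofReal hGx, hG,
    (by linarith [one_sub_log_pos hx0 hx1] : Real.log x ≤ 1)]

lemma comp_intInt {s : ℝ} (hs0 : 0 < s) (hs1 : s ≤ 1) :
    IntervalIntegrable (fun t => gd (t * s)) volume 0 1 := by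
  have h1 : IntervalIntegrable gd volume 0 s := by
    rw [intervalIntegrable_iff_integrableOn_Ioc_of_le hs0.le]
    exact (cv s hs0 hs1).1
  have h2 := h1.comp_mul_right (c := s)
  simpa [hs0.ne'] using h2

lemma S_ge {d : ℕ} (hd : 3 ≤ d) {s : ℝ} (hs0 : 0 < s) (hs1 : s ≤ 1) :
    K d * (s⁻¹ * (1 - Real.log (s / 2))⁻¹) ≤ S d gd s := by
  have hcomp := comp_intInt hs0 hs1
  have hmeas : AEStronglyMeasurable (fun t => gd (t * s) * rho d t)
      (volume.restrict (Set.uIoc (0:ℝ) 1)) :=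
    ((gd_measurable.comp (measurable_id.mul_const s)).mul
      (rho_continuous hd).measurable).aestronglyMeasurable
  have hts : ∀ t : ℝ, 0 ≤ t → 0 ≤ gd (t * s) := fun t ht =>
    gd_nonneg _ (mul_nonneg ht hs0.le)
  have hprod : IntervalIntegrable (fun t => gd (t * s) * rho d t) volume 0 1 := by
    refine (hcomp.const_mul (c d)).mono_fun hmeas ?_
    rw [Set.uIoc_of_le (by norm_num : (0:ℝ) ≤ 1)]
    refine (ae_restrict_iff' measurableSet_Ioc).mpr (.of_forall fun t ht => ?_)
    show ‖gd (t * s) * rho d t‖ ≤ ‖c d * gd (t * s)‖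
    have h1 : 0 ≤ gd (t * s) := hts t ht.1.le
    have h2 : 0 ≤ rho d t := rho_nonneg hd ⟨ht.1.le, ht.2⟩
    have h3 : rho d t ≤ c d := rho_le hd ⟨ht.1.le, ht.2⟩
    rw [Real.norm_eq_abs, Real.norm_eq_abs, abs_of_nonneg (mul_nonneg h1 h2),
      abs_of_nonneg (mul_nonneg (c_pos hd).le h1)]
    calc gd (t * s) * rho d t ≤ gd (t * s) * c d := mul_le_mul_of_nonneg_left h3 h1
      _ = c d * gd (t * s) := mul_comm _ _
  have hss1 : Set.uIcc (0:ℝ) (1/2) ⊆ Set.uIcc 0 1 := by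
    rw [Set.uIcc_of_le (by norm_num : (0:ℝ) ≤ 1/2), Set.uIcc_of_le (by norm_num : (0:ℝ) ≤ 1)]
    exact Set.Icc_subset_Icc le_rfl (by norm_num)
  have hss2 : Set.uIcc (1/2:ℝ) 1 ⊆ Set.uIcc 0 1 := by
    rw [Set.uIcc_of_le (by norm_num : (1/2:ℝ) ≤ 1), Set.uIcc_of_le (by norm_num : (0:ℝ) ≤ 1)]
    exact Set.Icc_subset_Icc (by norm_num) le_rfl
  have hsub1 : IntervalIntegrable (fun t => gd (t * s) * rho d t) volume 0 (1/2) :=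
    hprod.mono_set hss1
  have hsub2 : IntervalIntegrable (fun t => gd (t * s) * rho d t) volume (1/2) 1 :=
    hprod.mono_set hss2
  have hsplit : S d gd s = (∫ t in (0:ℝ)..(1/2), gd (t * s) * rho d t)
      + ∫ t in (1/2:ℝ)..1, gd (t * s) * rho d t :=
    (intervalIntegral.integral_add_adjacent_intervals hsub1 hsub2).symm
  have h2nonneg : 0 ≤ ∫ t in (1/2:ℝ)..1, gd (t * s) * rho d t := by
    refine intervalIntegral.integral_nonneg (by norm_num) fun t ht => ?_
    exact mul_nonneg (hts t (by linarith [ht.1])) (rho_nonneg hd ⟨by linarith [ht.1], ht.2⟩)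
  have hKcomp : IntervalIntegrable (fun t => K d * gd (t * s)) volume 0 (1/2) :=
    (hcomp.mono_set hss1).const_mul (K d)
  have h1ge : (∫ t in (0:ℝ)..(1/2), K d * gd (t * s))
      ≤ ∫ t in (0:ℝ)..(1/2), gd (t * s) * rho d t := by
    refine intervalIntegral.integral_mono_on (by norm_num) hKcomp hsub1 fun t ht => ?_
    calc K d * gd (t * s) = gd (t * s) * K d := mul_comm _ _
      _ ≤ gd (t * s) * rho d t :=
        mul_le_mul_of_nonneg_left (rho_ge hd ht) (hts t ht.1)
  have hval : (∫ t in (0:ℝ)..(1/2), K d * gd (t * s))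
      = K d * (s⁻¹ * (1 - Real.log (s / 2))⁻¹) := by
    rw [intervalIntegral.integral_const_mul]
    congr 1
    rw [intervalIntegral.integral_comp_mul_right gd hs0.ne']
    have e1 : (0:ℝ) * s = 0 := by ring
    have e2 : (1/2:ℝ) * s = s / 2 := by ring
    rw [e1, e2, smul_eq_mul]
    congr 1
    rw [intervalIntegral.integral_of_le (by linarith)]
    exact (cv (s/2) (by linarith) (by linarith)).2
  rw [hsplit, ← hval]
  linarith

lemma L_deriv {d : ℕ} {x : ℝ} (hx0 : 0 < x) (hx1 : x ≤ 1) :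
    HasDerivAt (fun s => -(K d) * Real.log (1 - Real.log (s / 2)))
      (K d * (x⁻¹ * (1 - Real.log (x / 2))⁻¹)) x := by
  have hx2 : (0:ℝ) < x / 2 := by linarith
  have hpos : 0 < 1 - Real.log (x / 2) := one_sub_log_pos hx2 (by linarith)
  have h1 : HasDerivAt (fun s : ℝ => s / 2) (1 / 2) x := by
    simpa using (hasDerivAt_id x).div_const 2
  have h2 : HasDerivAt (fun s : ℝ => Real.log (s / 2)) (x⁻¹) x := by
    have := h1.log hx2.ne'
    convert this using 1
    field_simp
  have h3 : HasDerivAt (fun s : ℝ => 1 - Real.log (s / 2)) (-x⁻¹) x := by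
    simpa using h2.const_sub 1
  have h4 := (h3.log hpos.ne').const_mul (-(K d))
  refine h4.congr_deriv ?_
  field_simp

lemma L_contOn {d : ℕ} {a : ℝ} (ha0 : 0 < a) (ha1 : a ≤ 1) :
    ContinuousOn (fun s => K d * (s⁻¹ * (1 - Real.log (s / 2))⁻¹)) (Set.uIcc a 1) := by
  intro x hx
  rw [Set.uIcc_of_le ha1] at hx
  have hx0 : 0 < x := lt_of_lt_of_le ha0 hx.1
  have hx2 : (0:ℝ) < x / 2 := by linarith
  have hpos : 0 < 1 - Real.log (x / 2) := one_sub_log_pos hx2 (by linarith [hx.2])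
  have c0 : ContinuousAt (fun s : ℝ => s / 2) x := continuousAt_id.div_const 2
  have c1 : ContinuousAt (fun s : ℝ => 1 - Real.log (s / 2)) x :=
    continuousAt_const.sub (c0.log hx2.ne')
  exact (continuousAt_const.mul ((continuousAt_id.inv₀ hx0.ne').mul
    (c1.inv₀ hpos.ne'))).continuousWithinAt

lemma L_not_int {d : ℕ} (hd : 3 ≤ d) :
    ¬ IntegrableOn (fun s => K d * (s⁻¹ * (1 - Real.log (s / 2))⁻¹)) (Ioc 0 1) := by
  intro h
  set L : ℝ → ℝ := fun s => K d * (s⁻¹ * (1 - Real.log (s / 2))⁻¹) with hL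
  have hK := K_pos hd
  have hLpos : ∀ s ∈ Ioc (0:ℝ) 1, 0 ≤ L s := by
    intro s hs
    have h2 : (0:ℝ) < s / 2 := by linarith [hs.1]
    have := one_sub_log_pos h2 (by linarith [hs.2])
    have := hs.1
    rw [hL]; positivity
  set M := ∫ s in Ioc (0:ℝ) 1, L s with hM
  -- for each a ∈ (0,1], the integral over (a,1] is bounded by M
  have hbound : ∀ a : ℝ, 0 < a → a ≤ 1 → ∫ s in Ioc a 1, L s ≤ M := by
    intro a ha0 ha1
    refine setIntegral_mono_set h ?_ ?_
    · exact (ae_restrict_iff' measurableSet_Ioc).mpr (.of_forall hLpos)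
    · exact (Set.Ioc_subset_Ioc_left ha0.le).eventuallyLE
  have hFTC : ∀ a : ℝ, 0 < a → a ≤ 1 → ∫ s in Ioc a 1, L s =
      K d * (Real.log (1 - Real.log (a / 2)) - Real.log (1 + Real.log 2)) := by
    intro a ha0 ha1
    have hcont : ContinuousOn L (Set.uIcc a 1) := L_contOn ha0 ha1
    have := intervalIntegral.integral_eq_sub_of_hasDerivAt
      (f := fun s => -(K d) * Real.log (1 - Real.log (s / 2))) (f' := L)
      (fun x hx => by
        rw [Set.uIcc_of_le ha1] at hx
        exact L_deriv (lt_of_lt_of_le ha0 hx.1) hx.2)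
      (hcont.intervalIntegrable)
    rw [intervalIntegral.integral_of_le ha1] at this
    rw [this]
    have hhalf : Real.log ((1:ℝ) / 2) = -Real.log 2 := by
      rw [one_div, Real.log_inv]
    show -K d * Real.log (1 - Real.log (1 / 2)) - -K d * Real.log (1 - Real.log (a / 2)) = _
    rw [hhalf]
    ring
  -- choose a small enough for contradiction
  set B := M / K d + Real.log (1 + Real.log 2) with hB
  set a := min (Real.exp (1 - Real.exp B)) (1/2) with ha
  have ha0 : 0 < a := lt_min (Real.exp_pos _) (by norm_num)
  have ha1 : a ≤ 1 := le_trans (min_le_right _ _) (by norm_num)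
  have hloga : Real.log (a / 2) < 1 - Real.exp B := by
    have h1 : a / 2 < Real.exp (1 - Real.exp B) := by
      have := min_le_left (Real.exp (1 - Real.exp B)) (1/2:ℝ)
      have := Real.exp_pos (1 - Real.exp B)
      linarith [ha0]
    calc Real.log (a / 2) < Real.log (Real.exp (1 - Real.exp B)) :=
          Real.log_lt_log (by linarith) h1
      _ = 1 - Real.exp B := Real.log_exp _
  have hgt : B < Real.log (1 - Real.log (a / 2)) := by
    rw [← Real.log_exp B]
    exact Real.log_lt_log (Real.exp_pos _) (by linarith)
  have := hbound a ha0 ha1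
  rw [hFTC a ha0 ha1] at this
  have hcontr : M < K d * (Real.log (1 - Real.log (a / 2)) - Real.log (1 + Real.log 2)) := by
    have h1 : M / K d < Real.log (1 - Real.log (a / 2)) - Real.log (1 + Real.log 2) := by
      rw [hB] at hgt; linarith
    calc M = K d * (M / K d) := by field_simp
      _ < K d * (Real.log (1 - Real.log (a / 2)) - Real.log (1 + Real.log 2)) := by
          exact mul_lt_mul_of_pos_left h1 hK
  linarith

lemma L_measurable (d : ℕ) :
    Measurable (fun s : ℝ => K d * (s⁻¹ * (1 - Real.log (s / 2))⁻¹)) :=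
  measurable_const.mul ((measurable_id.inv).mul
    ((measurable_const.sub (Real.measurable_log.comp (measurable_id.div_const 2))).inv))

theorem S_not_bounded_L1 (d : ℕ) (hd : 3 ≤ d) :
    IntegrableOn (fun t : ℝ => 1 / (t * (Real.log (Real.exp 1 / t)) ^ 2))
        (Set.Ioc (0:ℝ) 1) ∧
    (∫ t in Set.Ioc (0:ℝ) 1, 1 / (t * (Real.log (Real.exp 1 / t)) ^ 2)) = 1 ∧
    ¬ IntegrableOn (S d (fun t => 1 / (t * (Real.log (Real.exp 1 / t)) ^ 2)))
        (Set.Ioc (0:ℝ) 1) ∧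
    ¬ ∃ C : ℝ, ∀ f : ℝ → ℝ, IntegrableOn f (Set.Ioc (0:ℝ) 1) →
        IntegrableOn (S d f) (Set.Ioc (0:ℝ) 1) ∧
        (∫ s in Set.Ioc (0:ℝ) 1, |S d f s|) ≤ C * ∫ t in Set.Ioc (0:ℝ) 1, |f t| := by
  have hint : IntegrableOn gd (Set.Ioc (0:ℝ) 1) := (cv 1 one_pos le_rfl).1
  have hval : (∫ t in Set.Ioc (0:ℝ) 1, gd t) = 1 := by
    rw [(cv 1 one_pos le_rfl).2]; simp
  have hnotS : ¬ IntegrableOn (S d gd) (Set.Ioc (0:ℝ) 1) := by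
    intro h
    refine L_not_int hd ?_
    refine Integrable.mono h (L_measurable d).aestronglyMeasurable ?_
    refine (ae_restrict_iff' measurableSet_Ioc).mpr (.of_forall fun s hs => ?_)
    have hs0 := hs.1
    have hs1 := hs.2
    have h2 : (0:ℝ) < s / 2 := by linarith
    have hpos := one_sub_log_pos h2 (by linarith)
    have hK := K_pos hd
    have hLnn : 0 ≤ K d * (s⁻¹ * (1 - Real.log (s / 2))⁻¹) := by positivity
    rw [Real.norm_eq_abs, Real.norm_eq_abs, abs_of_nonneg hLnn]
    exact le_trans (S_ge hd hs0 hs1) (le_abs_self _)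
  exact ⟨hint, hval, hnotS, fun ⟨C, hC⟩ => hnotS (hC gd hint).1⟩
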